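/- arXiv:1201.4662 — 2 statements merged into one kernel-verified Lean document; each statement's English description precedes it below -/
import Mathlib

section
/- Let M be a connected simple matroid of rank 3 on a finite ground set E with rank function r. Suppose A is a flat of M with r(A) = 2, |E \ A| ≥ 3, and x ∈ E is an element with x ∉ A that belongs to no facet-defining flat F of rank 2 of M satisfying F ∩ A ≠ ∅. Then M is 2-decomposable by the hyperplane (A ∪ {x}, 2)_=. -/
open Set Matroid

namespace PaperWMO

variable {α : Type*}

/-- The rank of a set `X` in a matroid `M`: the size of a largest independent subset of `X`. -/
noncomputable def rk (M : Matroid α) (X : Set α) : ℕ :=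
  sSup {n : ℕ | ∃ I, M.Indep I ∧ I ⊆ X ∧ I.ncard = n}

/-- Contraction of the set `C` in the matroid `M`, defined by duality:
`M / C = (M✶ \ C)✶`, where deletion is restriction to the complement. -/
noncomputable def contract (M : Matroid α) (C : Set α) : Matroid α :=
  (M✶ ↾ (M.E \ C))✶

/-- A matroid is connected if its ground set is nonempty and it is not the direct sum of
two matroids on nonempty disjoint ground sets. -/
def Conn (M : Matroid α) : Prop :=
  M.E.Nonempty ∧ ¬ ∃ (M₁ M₂ : Matroid α) (h : Disjoint M₁.E M₂.E),
    M₁.E.Nonempty ∧ M₂.E.Nonempty ∧ M = Matroid.disjointSum M₁ M₂ h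

/-- A flat of `M`: a subset `F` of the ground set such that any superset
`B` with `F ⊆ B ⊆ M.E` of the same rank equals `F`. -/
def IsFlat (M : Matroid α) (F : Set α) : Prop :=
  F ⊆ M.E ∧ ∀ B : Set α, F ⊆ B → B ⊆ M.E → rk M B = rk M F → B = F

/-- A matroid is simple if every subset of the ground set with at most two elements
is independent. -/
def IsSimple (M : Matroid α) : Prop :=
  ∀ X ⊆ M.E, X.ncard ≤ 2 → M.Indep X

/-- A facet-defining flat of rank 2: a flat `F` of rank 2 such that
both the restriction `M ↾ F` and the contraction `M / F` are connected. -/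
def FacetFlat2 (M : Matroid α) (F : Set α) : Prop :=
  IsFlat M F ∧ rk M F = 2 ∧ Conn (M ↾ F) ∧ Conn (contract M F)

/-- `M` is 2-decomposable by the hyperplane `(A, a)_=`. -/
def TwoDecomposableBy (M : Matroid α) (A : Set α) (a : ℕ) : Prop :=
  (∃ N₁ : Matroid α, N₁.E = M.E ∧
      ∀ B : Set α, N₁.IsBase B ↔ M.IsBase B ∧ (B ∩ A).ncard ≤ a) ∧
  (∃ N₂ : Matroid α, N₂.E = M.E ∧
      ∀ B : Set α, N₂.IsBase B ↔ M.IsBase B ∧ a ≤ (B ∩ A).ncard) ∧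
  (∃ B : Set α, M.IsBase B ∧ a < (B ∩ A).ncard) ∧
  (∃ B : Set α, M.IsBase B ∧ (B ∩ A).ncard < a)

/-- A 3-partition in `M`: a partition of the ground set into three parts, each of size
at least two, such that no facet-defining flat of rank 2 meets all three parts, and the
union of any two parts has rank 3. -/
def ThreePartition (M : Matroid α) (A₁ A₂ A₃ : Set α) : Prop :=
  A₁ ∪ A₂ ∪ A₃ = M.E ∧
  Disjoint A₁ A₂ ∧ Disjoint A₂ A₃ ∧ Disjoint A₁ A₃ ∧
  2 ≤ A₁.ncard ∧ 2 ≤ A₂.ncard ∧ 2 ≤ A₃.ncard ∧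
  (¬ ∃ F : Set α, FacetFlat2 M F ∧
      (F ∩ A₁).Nonempty ∧ (F ∩ A₂).Nonempty ∧ (F ∩ A₃).Nonempty) ∧
  rk M (A₁ ∪ A₂) = 3 ∧ rk M (A₂ ∪ A₃) = 3 ∧ rk M (A₃ ∪ A₁) = 3

/-- The adjacency relation of the graph `g(A, B)` (with respect to the matroid `M`):
the vertex set is `B`, and distinct `x, y ∈ B` are adjacent iff some facet-defining flat
of rank 2 of `M` contains both `x` and `y` and meets `A`. -/
def gAdj (M : Matroid α) (A B : Set α) (x y : α) : Prop :=
  x ∈ B ∧ y ∈ B ∧ x ≠ y ∧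
    ∃ F : Set α, FacetFlat2 M F ∧ x ∈ F ∧ y ∈ F ∧ (F ∩ A).Nonempty

/-- `C` is the vertex set of a connected component of the graph `g(S, V)`. -/
def IsGComponent (M : Matroid α) (S V C : Set α) : Prop :=
  ∃ x ∈ V, C = {y | y ∈ V ∧ Relation.ReflTransGen (gAdj M S V) x y}


section AuxLemmas

variable {M : Matroid α} {I X F B J : Set α}

lemma rk_eq_ncard_of_basis (hfin : M.E.Finite) (hIX : M.IsBasis I X) : rk M X = I.ncard := by
  have hbdd : BddAbove {n : ℕ | ∃ J, M.Indep J ∧ J ⊆ X ∧ J.ncard = n} := by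
    refine ⟨M.E.ncard, ?_⟩
    rintro n ⟨J, hJ, -, rfl⟩
    exact ncard_le_ncard hJ.subset_ground hfin
  refine le_antisymm (csSup_le ⟨I.ncard, I, hIX.indep, hIX.subset, rfl⟩ ?_)
    (le_csSup hbdd ⟨I, hIX.indep, hIX.subset, rfl⟩)
  rintro n ⟨J, hJ, hJX, rfl⟩
  obtain ⟨J', hJ', hJJ'⟩ := hJ.subset_isBasis_of_subset hJX hIX.subset_ground
  have h1 : J'.encard = I.encard := hJ'.isBasis'.encard_eq_encard hIX.isBasis'
  have hfinJ' : J'.Finite := hfin.subset hJ'.indep.subset_ground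
  calc J.ncard ≤ J'.ncard := ncard_le_ncard hJJ' hfinJ'
    _ = I.ncard := by rw [ncard_def, h1, ← ncard_def]

lemma indep_ncard_le_rk (hfin : M.E.Finite) (hI : M.Indep I) (hIX : I ⊆ X) (hX : X ⊆ M.E) :
    I.ncard ≤ rk M X := by
  obtain ⟨J, hJ, hIJ⟩ := hI.subset_isBasis_of_subset hIX hX
  rw [rk_eq_ncard_of_basis hfin hJ]
  exact ncard_le_ncard hIJ (hfin.subset hJ.indep.subset_ground)

lemma exists_indep_ncard_rk (hfin : M.E.Finite) (hX : X ⊆ M.E) :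
    ∃ I, M.Indep I ∧ I ⊆ X ∧ I.ncard = rk M X := by
  obtain ⟨I, hI⟩ := M.exists_isBasis X hX
  exact ⟨I, hI.indep, hI.subset, (rk_eq_ncard_of_basis hfin hI).symm⟩

lemma rk_closure_eq (hfin : M.E.Finite) (hX : X ⊆ M.E) : rk M (M.closure X) = rk M X := by
  obtain ⟨I, hI⟩ := M.exists_isBasis X hX
  rw [rk_eq_ncard_of_basis hfin hI.isBasis_closure_right, rk_eq_ncard_of_basis hfin hI]

lemma isFlat_of_closure_eq (hfin : M.E.Finite) (hF : M.closure F = F) (hFE : F ⊆ M.E) :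
    IsFlat M F := by
  refine ⟨hFE, fun B hFB hBE hr => ?_⟩
  obtain ⟨I, hI⟩ := M.exists_isBasis F hFE
  obtain ⟨J, hJ, hIJ⟩ := hI.indep.subset_isBasis_of_subset (hI.subset.trans hFB) hBE
  have hIJcard : J.ncard ≤ I.ncard := by
    rw [← rk_eq_ncard_of_basis hfin hI, ← rk_eq_ncard_of_basis hfin hJ, hr]
  have hIJ' : I = J := eq_of_subset_of_ncard_le hIJ hIJcard (hfin.subset hJ.indep.subset_ground)
  refine subset_antisymm ?_ hFB
  calc B ⊆ M.closure J := hJ.subset_closure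
    _ = M.closure I := by rw [hIJ']
    _ ⊆ M.closure F := M.closure_subset_closure hI.subset
    _ = F := hF

lemma closure_eq_of_isFlat (hfin : M.E.Finite) (h : IsFlat M F) : M.closure F = F :=
  h.2 (M.closure F) (M.subset_closure F h.1) (M.closure_subset_ground F) (rk_closure_eq hfin h.1)

lemma base_iff_card (hfin : M.E.Finite) (hrank : rk M M.E = 3) :
    M.IsBase B ↔ M.Indep B ∧ B.ncard = 3 := by
  obtain ⟨I₀, hI₀, -, hI₀c⟩ := exists_indep_ncard_rk (M := M) hfin Subset.rfl
  rw [hrank] at hI₀c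
  have hbase : ∀ {J : Set α}, M.Indep J → J.ncard = 3 → M.IsBase J := by
    intro J hJ hJc
    obtain ⟨B', hB', hJB'⟩ := hJ.exists_isBase_superset
    have hB'le : B'.ncard ≤ 3 := by
      have := indep_ncard_le_rk hfin hB'.indep hB'.indep.subset_ground Subset.rfl
      rwa [hrank] at this
    have hJB : J = B' :=
      eq_of_subset_of_ncard_le hJB' (hB'le.trans_eq hJc.symm)
        (hfin.subset hB'.indep.subset_ground)
    rwa [hJB]
  constructor
  · intro hB
    refine ⟨hB.indep, ?_⟩
    have h0 := hB.encard_eq_encard_of_isBase (hbase hI₀ hI₀c)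
    have hBc : B.ncard = I₀.ncard := by rw [ncard_def, h0, ← ncard_def]
    rw [hBc, hI₀c]
  · rintro ⟨h1, h2⟩; exact hbase h1 h2

lemma conn_restrict (M : Matroid α) (hfin : M.E.Finite) (hFE : F ⊆ M.E)
    (h3 : 3 ≤ F.ncard)
    (hpair : ∀ p ⊆ F, p.ncard ≤ 2 → M.Indep p)
    (htriple : ∀ t ⊆ F, t.ncard = 3 → ¬ M.Indep t) :
    Conn (M ↾ F) := by
  have hFfin : F.Finite := hfin.subset hFE
  have hground : (M ↾ F).E = F := restrict_ground_eq
  constructor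
  · rw [hground]; exact nonempty_of_ncard_ne_zero (by omega)
  rintro ⟨M₁, M₂, hd, h1, h2, heq⟩
  have hunion : F = M₁.E ∪ M₂.E := by
    conv_lhs => rw [← hground]
    rw [heq]; simp
  have hfin1 : M₁.E.Finite := hFfin.subset (hunion ▸ subset_union_left)
  have hfin2 : M₂.E.Finite := hFfin.subset (hunion ▸ subset_union_right)
  have key1 : ∀ p ⊆ M₁.E, p.ncard ≤ 2 → M₁.Indep p := by
    intro p hp hpc
    have hpF : p ⊆ F := hp.trans (hunion ▸ subset_union_left)
    have h' : (M ↾ F).Indep p := restrict_indep_iff.2 ⟨hpair p hpF hpc, hpF⟩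
    rw [heq, disjointSum_indep_iff] at h'
    have h'' := h'.1
    rwa [inter_eq_self_of_subset_left hp] at h''
  have key2 : ∀ p ⊆ M₂.E, p.ncard ≤ 2 → M₂.Indep p := by
    intro p hp hpc
    have hpF : p ⊆ F := hp.trans (hunion ▸ subset_union_right)
    have h' : (M ↾ F).Indep p := restrict_indep_iff.2 ⟨hpair p hpF hpc, hpF⟩
    rw [heq, disjointSum_indep_iff] at h'
    have h'' := h'.2.1
    rwa [inter_eq_self_of_subset_left hp] at h''
  have main : ∀ a b c : α, a ∈ M₁.E → b ∈ M₁.E → c ∈ M₂.E → a ≠ b → False := by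
    intro a b c ha hb hc hab
    have hac : a ≠ c := hd.ne_of_mem ha hc
    have hbc : b ≠ c := hd.ne_of_mem hb hc
    have hIab : M₁.Indep {a, b} := key1 {a, b}
      (by rintro z (rfl | rfl) <;> assumption) (by rw [ncard_pair hab])
    have hIc : M₂.Indep {c} := key2 {c} (by rintro z rfl; exact hc) (by simp)
    have hsub : ({a, b, c} : Set α) ⊆ F := by
      rw [hunion]; rintro z (rfl | rfl | rfl)
      · exact Or.inl ha
      · exact Or.inl hb
      · exact Or.inr hc
    have hi1 : ({a, b, c} : Set α) ∩ M₁.E = {a, b} := by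
      apply subset_antisymm
      · rintro z ⟨(rfl | rfl | rfl), hz⟩
        · exact Or.inl rfl
        · exact Or.inr rfl
        · exact absurd rfl (hd.ne_of_mem hz hc)
      · rintro z (rfl | rfl)
        · exact ⟨Or.inl rfl, ha⟩
        · exact ⟨Or.inr (Or.inl rfl), hb⟩
    have hi2 : ({a, b, c} : Set α) ∩ M₂.E = {c} := by
      apply subset_antisymm
      · rintro z ⟨(rfl | rfl | rfl), hz⟩
        · exact absurd rfl (hd.ne_of_mem ha hz)
        · exact absurd rfl (hd.ne_of_mem hb hz)
        · exact rfl
      · rintro z rfl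
        exact ⟨Or.inr (Or.inr rfl), hc⟩
    have hind : (M ↾ F).Indep {a, b, c} := by
      rw [heq, disjointSum_indep_iff, hi1, hi2]
      exact ⟨hIab, hIc, hunion ▸ hsub⟩
    exact htriple {a, b, c} hsub (ncard_eq_three.mpr ⟨a, b, c, hab, hac, hbc, rfl⟩)
      (restrict_indep_iff.1 hind).1
  have main' : ∀ a b c : α, a ∈ M₂.E → b ∈ M₂.E → c ∈ M₁.E → a ≠ b → False := by
    intro a b c ha hb hc hab
    have hac : a ≠ c := (hd.ne_of_mem hc ha).symm
    have hbc : b ≠ c := (hd.ne_of_mem hc hb).symm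
    have hIab : M₂.Indep {a, b} := key2 {a, b}
      (by rintro z (rfl | rfl) <;> assumption) (by rw [ncard_pair hab])
    have hIc : M₁.Indep {c} := key1 {c} (by rintro z rfl; exact hc) (by simp)
    have hsub : ({a, b, c} : Set α) ⊆ F := by
      rw [hunion]; rintro z (rfl | rfl | rfl)
      · exact Or.inr ha
      · exact Or.inr hb
      · exact Or.inl hc
    have hi1 : ({a, b, c} : Set α) ∩ M₁.E = {c} := by
      apply subset_antisymm
      · rintro z ⟨(rfl | rfl | rfl), hz⟩
        · exact absurd rfl (hd.ne_of_mem hz ha)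
        · exact absurd rfl (hd.ne_of_mem hz hb)
        · exact rfl
      · rintro z rfl
        exact ⟨Or.inr (Or.inr rfl), hc⟩
    have hi2 : ({a, b, c} : Set α) ∩ M₂.E = {a, b} := by
      apply subset_antisymm
      · rintro z ⟨(rfl | rfl | rfl), hz⟩
        · exact Or.inl rfl
        · exact Or.inr rfl
        · exact absurd rfl (hd.ne_of_mem hc hz).symm
      · rintro z (rfl | rfl)
        · exact ⟨Or.inl rfl, ha⟩
        · exact ⟨Or.inr (Or.inl rfl), hb⟩
    have hind : (M ↾ F).Indep {a, b, c} := by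
      rw [heq, disjointSum_indep_iff, hi1, hi2]
      exact ⟨hIc, hIab, hunion ▸ hsub⟩
    exact htriple {a, b, c} hsub (ncard_eq_three.mpr ⟨a, b, c, hab, hac, hbc, rfl⟩)
      (restrict_indep_iff.1 hind).1
  have hcase : (2 ≤ M₁.E.ncard) ∨ (2 ≤ M₂.E.ncard) := by
    by_contra hcon
    push_neg at hcon
    have := ncard_union_le M₁.E M₂.E
    rw [← hunion] at this
    omega
  rcases hcase with h | h
  · obtain ⟨a, b, ha, hb, hab⟩ := (one_lt_ncard_iff hfin1).1 (by omega)
    obtain ⟨c, hc⟩ := h2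
    exact main a b c ha hb hc hab
  · obtain ⟨a, b, ha, hb, hab⟩ := (one_lt_ncard_iff hfin2).1 (by omega)
    obtain ⟨c, hc⟩ := h1
    exact main' a b c ha hb hc hab

lemma conn_contract_aux (M : Matroid α) (hfin : M.E.Finite) {F I : Set α}
    (hIF : M.IsBasis I F) (hIc : I.ncard = 2) (hFcl : M.closure F = F)
    (hrank : rk M M.E = 3) : Conn (contract M F) := by
  have hFE : F ⊆ M.E := hIF.subset_ground
  set X := M.E \ F with hXdef
  have hXE : X ⊆ M.E := diff_subset
  have hXfin : X.Finite := hfin.subset hXE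
  have hground : (contract M F).E = X := rfl
  have hrkF : rk M F = 2 := by rw [rk_eq_ncard_of_basis hfin hIF, hIc]
  have hXne : X.Nonempty := by
    rw [nonempty_iff_ne_empty]
    intro h
    have hEF : M.E = F := subset_antisymm (diff_eq_empty.1 h) hFE
    rw [hEF, hrkF] at hrank
    omega
  have hXE' : X ⊆ M✶.E := hXE
  have hDbase : ∀ e ∈ X, (M✶ ↾ X).IsBase (X \ {e}) := by
    intro e he
    have heI : e ∉ M.closure I := by
      rw [hIF.closure_eq_closure, hFcl]; exact he.2
    have hins : M.Indep (insert e I) := by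
      rw [hIF.indep.insert_indep_iff]
      exact Or.inl ⟨he.1, heI⟩
    have hbase : M.IsBase (insert e I) := by
      rw [base_iff_card hfin hrank]
      refine ⟨hins, ?_⟩
      rw [ncard_insert_of_notMem (fun h => he.2 (hIF.subset h))
        (hfin.subset hIF.indep.subset_ground), hIc]
    rw [isBase_restrict_iff hXE', isBasis_iff hXE']
    refine ⟨?_, diff_subset, ?_⟩
    · rw [dual_indep_iff_exists (show X \ {e} ⊆ M.E from diff_subset.trans hXE)]
      refine ⟨insert e I, hbase, ?_⟩
      rw [disjoint_left]
      rintro z ⟨hzX, hze⟩ hz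
      rcases hz with rfl | hzI
      · exact hze rfl
      · exact hzX.2 (hIF.subset hzI)
    · intro J hJ hsub hJX
      by_contra hne
      have hJeq : J = X := by
        obtain ⟨z, hzJ, hz⟩ := exists_of_ssubset (hsub.ssubset_of_ne hne)
        have hze : z = e := by
          by_contra hc
          exact hz ⟨hJX hzJ, hc⟩
        subst hze
        refine subset_antisymm hJX (fun w hw => ?_)
        by_cases hwz : w = z
        · rwa [hwz]
        · exact hsub ⟨hw, hwz⟩
      rw [hJeq, dual_indep_iff_exists (show X ⊆ M.E from hXE)] at hJ
      obtain ⟨B, hB, hdisj⟩ := hJ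
      have hBF : B ⊆ F := by
        intro z hz
        have hzE : z ∈ M.E := hB.indep.subset_ground hz
        by_contra hzF
        exact disjoint_right.1 hdisj hz ⟨hzE, hzF⟩
      have hle : B.ncard ≤ 2 := by rw [← hrkF]; exact indep_ncard_le_rk hfin hB.indep hBF hFE
      have h3 : B.ncard = 3 := ((base_iff_card hfin hrank).1 hB).2
      omega
  constructor
  · rw [hground]; exact hXne
  rintro ⟨M₁, M₂, hd, h1, h2, heq⟩
  have hunion : X = M₁.E ∪ M₂.E := by
    conv_lhs => rw [← hground]
    rw [heq]; simp
  obtain ⟨a, ha⟩ := h1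
  obtain ⟨b, hb⟩ := h2
  have haX : a ∈ X := hunion ▸ Or.inl ha
  have hbX : b ∈ X := hunion ▸ Or.inr hb
  have hab : a ≠ b := hd.ne_of_mem ha hb
  have hsing : ∀ e ∈ X, (contract M F).Indep {e} := by
    intro e he
    show (M✶ ↾ X)✶.Indep {e}
    rw [dual_indep_iff_exists (show ({e} : Set α) ⊆ (M✶ ↾ X).E by
      rw [restrict_ground_eq]; exact singleton_subset_iff.2 he)]
    refine ⟨X \ {e}, hDbase e he, ?_⟩
    rw [disjoint_left]
    rintro z rfl hz
    exact hz.2 rfl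
  have hM1a : M₁.Indep {a} := by
    have h' := hsing a haX
    rw [heq, disjointSum_indep_iff] at h'
    have h'' := h'.1
    rwa [inter_eq_self_of_subset_left (singleton_subset_iff.2 ha)] at h''
  have hM2b : M₂.Indep {b} := by
    have h' := hsing b hbX
    rw [heq, disjointSum_indep_iff] at h'
    have h'' := h'.2.1
    rwa [inter_eq_self_of_subset_left (singleton_subset_iff.2 hb)] at h''
  have hpairind : (contract M F).Indep {a, b} := by
    rw [heq, disjointSum_indep_iff]
    refine ⟨?_, ?_, ?_⟩
    · have hi : ({a, b} : Set α) ∩ M₁.E = {a} := by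
        apply subset_antisymm
        · rintro z ⟨(rfl | rfl), hz⟩
          · exact rfl
          · exact absurd rfl (hd.ne_of_mem hz hb)
        · rintro z rfl; exact ⟨Or.inl rfl, ha⟩
      rw [hi]; exact hM1a
    · have hi : ({a, b} : Set α) ∩ M₂.E = {b} := by
        apply subset_antisymm
        · rintro z ⟨(rfl | rfl), hz⟩
          · exact absurd rfl (hd.ne_of_mem ha hz)
          · exact rfl
        · rintro z rfl; exact ⟨Or.inr rfl, hb⟩
      rw [hi]; exact hM2b
    · rintro z (rfl | rfl)
      · exact Or.inl ha
      · exact Or.inr hb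
  have hpair' : (M✶ ↾ X)✶.Indep {a, b} := hpairind
  rw [dual_indep_iff_exists (show ({a, b} : Set α) ⊆ (M✶ ↾ X).E by
    rw [restrict_ground_eq]
    rintro z (rfl | rfl)
    · exact haX
    · exact hbX)] at hpair'
  obtain ⟨B, hB, hdisj⟩ := hpair'
  have hBX : B ⊆ X := hB.subset_ground
  have hcardeq : B.encard = (X \ {a}).encard := hB.encard_eq_encard_of_isBase (hDbase a haX)
  have hBncard : B.ncard = (X \ {a}).ncard := by rw [ncard_def, hcardeq, ← ncard_def]
  have h1' : (X \ {a}).ncard = X.ncard - 1 := ncard_diff_singleton_of_mem haX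
  have hsubXB : ({a, b} : Set α) ⊆ X \ B := by
    rintro z (rfl | rfl)
    · exact ⟨haX, fun h => disjoint_left.1 hdisj (Or.inl rfl) h⟩
    · exact ⟨hbX, fun h => disjoint_left.1 hdisj (Or.inr rfl) h⟩
  have h2' : (X \ B).ncard = X.ncard - B.ncard := ncard_diff hBX (hXfin.subset hBX)
  have h3' : 2 ≤ (X \ B).ncard := by
    rw [← ncard_pair hab]
    exact ncard_le_ncard hsubXB (hXfin.diff)
  have hX1 : 1 ≤ X.ncard := hXne.ncard_pos hXfin
  omega

lemma key_indep (M : Matroid α) (hfin : M.E.Finite) (hsimple : IsSimple M)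
    (hrank : rk M M.E = 3) {A : Set α} {x : α} (hAE : A ⊆ M.E)
    (hxE : x ∈ M.E) (hxA : x ∉ A)
    (hx : ∀ F : Set α, FacetFlat2 M F → (F ∩ A).Nonempty → x ∉ F) :
    ∀ a ∈ A, ∀ e ∈ M.E, e ∉ ({a, x} : Set α) → M.Indep (insert e {a, x}) := by

    intro a haA e heE he
    have haE : a ∈ M.E := hAE haA
    have hax : a ≠ x := fun h => hxA (h ▸ haA)
    have hpairE : ({a, x} : Set α) ⊆ M.E := by rintro z (rfl | rfl) <;> assumption
    have haxI : M.Indep {a, x} := hsimple _ hpairE (by rw [ncard_pair hax])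
    by_contra hdep
    rw [haxI.insert_indep_iff_of_notMem he] at hdep
    have heF : e ∈ M.closure {a, x} := by
      by_contra h; exact hdep ⟨heE, h⟩
    set F := M.closure {a, x} with hFdef
    have hFE : F ⊆ M.E := M.closure_subset_ground _
    have hsub : ({a, x} : Set α) ⊆ F := M.subset_closure _ hpairE
    have hbasisF : M.IsBasis {a, x} F := haxI.isBasis_self.isBasis_closure_right
    have hrkF : rk M F = 2 := by rw [rk_eq_ncard_of_basis hfin hbasisF, ncard_pair hax]
    have hF3 : 3 ≤ F.ncard := by
      have hss : insert e {a, x} ⊆ F := insert_subset heF hsub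
      have hc3 : (insert e ({a, x} : Set α)).ncard = 3 := by
        rw [ncard_insert_of_notMem he, ncard_pair hax]
      calc (3 : ℕ) = (insert e ({a, x} : Set α)).ncard := hc3.symm
        _ ≤ F.ncard := ncard_le_ncard hss (hfin.subset hFE)
    have hFfacet : FacetFlat2 M F := by
      refine ⟨isFlat_of_closure_eq hfin (M.closure_closure _) hFE, hrkF, ?_, ?_⟩
      · refine conn_restrict M hfin hFE hF3 (fun p hp hc => hsimple p (hp.trans hFE) hc) ?_
        intro t ht hc hind
        have := indep_ncard_le_rk hfin hind ht hFE
        rw [hrkF, hc] at this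
        omega
      · exact conn_contract_aux M hfin hbasisF (ncard_pair hax) (M.closure_closure _) hrank
    exact hx F hFfacet ⟨a, hsub (Or.inl rfl), haA⟩ (hsub (Or.inr rfl))


lemma l4_indep (M : Matroid α) (hfin : M.E.Finite) (hsimple : IsSimple M)
    {A : Set α} (hAE : A ⊆ M.E) (hclA : M.closure A = A) :
    ∀ a b e : α, a ∈ A → b ∈ A → a ≠ b → e ∈ M.E → e ∉ A → M.Indep (insert e {a, b}) := by

    intro a b e haA hbA hab heE heA
    have hsubA : ({a, b} : Set α) ⊆ A := by rintro z (rfl | rfl) <;> assumption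
    have hpair : M.Indep {a, b} := hsimple _ (hsubA.trans hAE) (by rw [ncard_pair hab])
    have heab : e ∉ ({a, b} : Set α) := fun h => heA (hsubA h)
    rw [hpair.insert_indep_iff_of_notMem heab]
    refine ⟨heE, fun hecl => heA ?_⟩
    have hcl : M.closure {a, b} ⊆ A := by
      rw [← hclA]; exact M.closure_subset_closure hsubA
    exact hcl hecl


lemma aug_one (M : Matroid α) (hfin : M.E.Finite) (hsimple : IsSimple M)
    (hrank : rk M M.E = 3) {A : Set α} {x : α} (hAE : A ⊆ M.E)
    (hclA : M.closure A = A) (hxE : x ∈ M.E) (hxA : x ∉ A)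
    (hx : ∀ F : Set α, FacetFlat2 M F → (F ∩ A).Nonempty → x ∉ F) :
    ∀ ⦃I J : Set α⦄,
      (M.Indep I ∧ (I ∩ (A ∪ {x})).ncard ≤ 2) →
      (M.Indep J ∧ (J ∩ (A ∪ {x})).ncard ≤ 2) → I.ncard < J.ncard →
      ∃ e ∈ J, e ∉ I ∧ M.Indep (insert e I) ∧ (insert e I ∩ (A ∪ {x})).ncard ≤ 2 := by

  set A' : Set α := A ∪ {x} with hA'def
  have hmemA' : ∀ z : α, z ∈ A' ↔ z ∈ A ∨ z = x := by
    intro z; simp [hA'def, or_comm]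
  have hAsubA' : A ⊆ A' := subset_union_left
  have hxA' : x ∈ A' := Or.inr rfl
  have hfinI : ∀ {I : Set α}, M.Indep I → I.Finite := fun hI => hfin.subset hI.subset_ground
  have hIle3 : ∀ {I : Set α}, M.Indep I → I.ncard ≤ 3 := by
    intro I hI
    have h := indep_ncard_le_rk hfin hI hI.subset_ground Subset.rfl
    rwa [hrank] at h
  have hK := key_indep M hfin hsimple hrank hAE hxE hxA hx
  have hL4 := l4_indep M hfin hsimple hAE hclA
  have hencard : ∀ {I J : Set α}, I.Finite → J.Finite → I.ncard < J.ncard →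
      I.encard < J.encard := by
    intro I J hIf hJf h
    rw [← hIf.cast_ncard_eq, ← hJf.cast_ncard_eq]
    exact_mod_cast h

  rintro I J ⟨hI, hIA⟩ ⟨hJ, hJA⟩ hlt
  have hIfin := hfinI hI
  have hJfin := hfinI hJ
  by_cases h1 : (I ∩ A').ncard ≤ 1
  · obtain ⟨e, he, hind⟩ := hI.augment hJ (hencard hIfin hJfin hlt)
    refine ⟨e, he.1, he.2, hind, ?_⟩
    have hss : insert e I ∩ A' ⊆ insert e (I ∩ A') := by
      rintro w ⟨(rfl | hwI), hwA'⟩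
      · exact Or.inl rfl
      · exact Or.inr ⟨hwI, hwA'⟩
    calc (insert e I ∩ A').ncard ≤ (insert e (I ∩ A')).ncard :=
          ncard_le_ncard hss ((hIfin.inter_of_left _).insert e)
      _ ≤ (I ∩ A').ncard + 1 := ncard_insert_le _ _
      _ ≤ 2 := by omega
  · push_neg at h1
    have h2 : (I ∩ A').ncard = 2 := le_antisymm hIA h1
    have hIc2 : 2 ≤ I.ncard := h2 ▸ ncard_le_ncard inter_subset_left hIfin
    have hJle := hIle3 hJ
    have hIle := hIle3 hI
    have hIc : I.ncard = 2 := by omega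
    have hJc : J.ncard = 3 := by omega
    have hIA' : I ⊆ A' := by
      have hinter : I ∩ A' = I :=
        eq_of_subset_of_ncard_le inter_subset_left (by omega) hIfin
      intro w hw
      rw [← hinter] at hw
      exact hw.2
    have hJdiff : (J \ A').Nonempty := by
      rw [nonempty_iff_ne_empty]
      intro hemp
      rw [inter_eq_self_of_subset_left (diff_eq_empty.1 hemp)] at hJA
      omega
    obtain ⟨e, heJ, heA'⟩ := hJdiff
    have heI : e ∉ I := fun h => heA' (hIA' h)
    have heE : e ∈ M.E := hJ.subset_ground heJ
    have hins : M.Indep (insert e I) := by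
      obtain ⟨u, v, huv, rfl⟩ := ncard_eq_two.1 hIc
      by_cases hxI : x ∈ ({u, v} : Set α)
      · rcases hxI with rfl | rfl
        · -- I = {x, v}
          have hvA : v ∈ A := by
            have hv := hIA' (show v ∈ ({x, v} : Set α) from Or.inr rfl)
            rcases (hmemA' v).1 hv with h | h
            · exact h
            · exact absurd h.symm huv
          have h' := hK v hvA e heE (by
            rintro (rfl | rfl)
            · exact heI (Or.inr rfl)
            · exact heA' hxA')
          rwa [pair_comm x v]
        · -- I = {u, x}
          have huA : u ∈ A := by
            have hu := hIA' (show u ∈ ({u, x} : Set α) from Or.inl rfl)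
            rcases (hmemA' u).1 hu with h | h
            · exact h
            · exact absurd h huv
          exact hK u huA e heE (by
            rintro (rfl | rfl)
            · exact heI (Or.inl rfl)
            · exact heA' hxA')
      · have hIsubA : ({u, v} : Set α) ⊆ A := by
          intro w hw
          rcases (hmemA' w).1 (hIA' hw) with h | h
          · exact h
          · exact absurd (h ▸ hw) hxI
        exact hL4 u v e (hIsubA (Or.inl rfl)) (hIsubA (Or.inr rfl)) huv heE
          (fun h => heA' (hAsubA' h))
    refine ⟨e, heJ, heI, hins, ?_⟩
    have hcap : insert e I ∩ A' = I ∩ A' := by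
      ext w
      simp only [mem_inter_iff, mem_insert_iff]
      constructor
      · rintro ⟨rfl | hwI, hwA'⟩
        · exact absurd hwA' heA'
        · exact ⟨hwI, hwA'⟩
      · rintro ⟨hwI, hwA'⟩
        exact ⟨Or.inr hwI, hwA'⟩
    rw [hcap]
    omega


lemma aug_two (M : Matroid α) (hfin : M.E.Finite) (hsimple : IsSimple M)
    (hrank : rk M M.E = 3) {A : Set α} {x : α} (hAE : A ⊆ M.E)
    (hclA : M.closure A = A) (hxE : x ∈ M.E) (hxA : x ∉ A)
    (hx : ∀ F : Set α, FacetFlat2 M F → (F ∩ A).Nonempty → x ∉ F) :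
    ∀ ⦃I J : Set α⦄,
      (M.Indep I ∧ (I \ (A ∪ {x})).ncard ≤ 1) →
      (M.Indep J ∧ (J \ (A ∪ {x})).ncard ≤ 1) → I.ncard < J.ncard →
      ∃ e ∈ J, e ∉ I ∧ M.Indep (insert e I) ∧ (insert e I \ (A ∪ {x})).ncard ≤ 1 := by

  set A' : Set α := A ∪ {x} with hA'def
  have hmemA' : ∀ z : α, z ∈ A' ↔ z ∈ A ∨ z = x := by
    intro z; simp [hA'def, or_comm]
  have hAsubA' : A ⊆ A' := subset_union_left
  have hxA' : x ∈ A' := Or.inr rfl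
  have hfinI : ∀ {I : Set α}, M.Indep I → I.Finite := fun hI => hfin.subset hI.subset_ground
  have hIle3 : ∀ {I : Set α}, M.Indep I → I.ncard ≤ 3 := by
    intro I hI
    have h := indep_ncard_le_rk hfin hI hI.subset_ground Subset.rfl
    rwa [hrank] at h
  have hK := key_indep M hfin hsimple hrank hAE hxE hxA hx
  have hL4 := l4_indep M hfin hsimple hAE hclA
  have hencard : ∀ {I J : Set α}, I.Finite → J.Finite → I.ncard < J.ncard →
      I.encard < J.encard := by
    intro I J hIf hJf h
    rw [← hIf.cast_ncard_eq, ← hJf.cast_ncard_eq]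
    exact_mod_cast h

  rintro I J ⟨hI, hIA⟩ ⟨hJ, hJA⟩ hlt
  have hIfin := hfinI hI
  have hJfin := hfinI hJ
  have hsplitI : (I ∩ A').ncard + (I \ A').ncard = I.ncard :=
    ncard_inter_add_ncard_diff_eq_ncard I A' hIfin
  have hsplitJ : (J ∩ A').ncard + (J \ A').ncard = J.ncard :=
    ncard_inter_add_ncard_diff_eq_ncard J A' hJfin
  by_cases h1 : (I \ A').ncard = 0
  · obtain ⟨e, he, hind⟩ := hI.augment hJ (hencard hIfin hJfin hlt)
    refine ⟨e, he.1, he.2, hind, ?_⟩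
    have hss : insert e I \ A' ⊆ insert e (I \ A') := by
      rintro w ⟨(rfl | hwI), hwA'⟩
      · exact Or.inl rfl
      · exact Or.inr ⟨hwI, hwA'⟩
    calc (insert e I \ A').ncard ≤ (insert e (I \ A')).ncard :=
          ncard_le_ncard hss ((hIfin.diff).insert e)
      _ ≤ (I \ A').ncard + 1 := ncard_insert_le _ _
      _ ≤ 1 := by omega
  · have h1' : (I \ A').ncard = 1 := by omega
    obtain ⟨e₀, he₀⟩ := ncard_eq_one.1 h1'
    have he₀I : e₀ ∈ I := by
      have : e₀ ∈ I \ A' := he₀ ▸ rfl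
      exact this.1
    have he₀A' : e₀ ∉ A' := by
      have : e₀ ∈ I \ A' := he₀ ▸ rfl
      exact this.2
    have he₀E : e₀ ∈ M.E := hI.subset_ground he₀I
    have hJle := hIle3 hJ
    have hIle := hIle3 hI
    have hIge1 : 1 ≤ I.ncard := by omega
    rcases Nat.lt_or_ge I.ncard 2 with hI1 | hI2
    · -- I = {e₀}
      have hIc : I.ncard = 1 := by omega
      have hIeq : I = {e₀} :=
        (eq_of_subset_of_ncard_le (singleton_subset_iff.2 he₀I)
          (by rw [ncard_singleton]; omega) hIfin).symm
      have hJcap : (J ∩ A').Nonempty := by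
        rw [nonempty_iff_ne_empty]
        intro h
        rw [h, ncard_empty] at hsplitJ
        omega
      obtain ⟨f, hfJ, hfA'⟩ := hJcap
      have hfI : f ∉ I := by
        rw [hIeq]
        rintro rfl
        exact he₀A' hfA'
      refine ⟨f, hfJ, hfI, ?_, ?_⟩
      · refine hsimple _ (insert_subset (hJ.subset_ground hfJ) hI.subset_ground) ?_
        calc (insert f I).ncard ≤ I.ncard + 1 := ncard_insert_le _ _
          _ ≤ 2 := by omega
      · have hdd : insert f I \ A' = I \ A' := by
          ext w
          simp only [mem_diff, mem_insert_iff]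
          constructor
          · rintro ⟨rfl | hwI, hwA'⟩
            · exact absurd hfA' hwA'
            · exact ⟨hwI, hwA'⟩
          · rintro ⟨hwI, hwA'⟩
            exact ⟨Or.inr hwI, hwA'⟩
        rw [hdd]
        omega
    · have hIc : I.ncard = 2 := by omega
      have hJc : J.ncard = 3 := by omega
      have hIcap1 : (I ∩ A').ncard = 1 := by omega
      obtain ⟨c, hc⟩ := ncard_eq_one.1 hIcap1
      have hcI : c ∈ I := by
        have : c ∈ I ∩ A' := hc ▸ rfl
        exact this.1
      have hcA' : c ∈ A' := by
        have : c ∈ I ∩ A' := hc ▸ rfl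
        exact this.2
      have hce₀ : c ≠ e₀ := fun h => he₀A' (h ▸ hcA')
      have hIeq : I = {c, e₀} := by
        have hu := inter_union_diff I A'
        rw [hc, he₀] at hu
        rw [← hu]
        rfl
      have hJcap2 : 2 ≤ (J ∩ A').ncard := by omega
      have hne : ((J ∩ A') \ {c}).Nonempty := by
        rw [nonempty_iff_ne_empty]
        intro h
        have hsub : J ∩ A' ⊆ {c} := diff_eq_empty.1 h
        have := ncard_le_ncard hsub (finite_singleton c)
        rw [ncard_singleton] at this
        omega
      obtain ⟨f, hf⟩ := hne
      have hfJ : f ∈ J := hf.1.1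
      have hfA' : f ∈ A' := hf.1.2
      have hfc : f ≠ c := by simpa using hf.2
      have hfI : f ∉ I := by
        rw [hIeq]
        rintro (rfl | rfl)
        · exact hfc rfl
        · exact he₀A' hfA'
      have hfE : f ∈ M.E := hJ.subset_ground hfJ
      have hfe₀ : f ≠ e₀ := fun h => he₀A' (h ▸ hfA')
      have he₀ne_c : e₀ ∉ ({c, x} : Set α) := by
        intro hmem
        rcases hmem with h | h
        · exact hce₀ h.symm
        · exact he₀A' (by rw [h]; exact hxA')
      have hind : M.Indep (insert f ({c, e₀} : Set α)) := by
        rcases (hmemA' c).1 hcA' with hcA | hcx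
        · rcases (hmemA' f).1 hfA' with hfA | hfx
          · -- both c, f ∈ A
            have h' := hL4 f c e₀ hfA hcA hfc he₀E (fun h => he₀A' (hAsubA' h))
            have hseteq : insert f ({c, e₀} : Set α) = insert e₀ {f, c} := by
              ext w; simp only [mem_insert_iff, mem_singleton_iff]; tauto
            rwa [hseteq]
          · -- f = x
            have h' := hK c hcA e₀ he₀E he₀ne_c
            have hseteq : insert f ({c, e₀} : Set α) = insert e₀ {c, x} := by
              rw [hfx]; ext w; simp only [mem_insert_iff, mem_singleton_iff]; tauto
            rwa [hseteq]
        · -- c = x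
          have hfA : f ∈ A := by
            rcases (hmemA' f).1 hfA' with h | h
            · exact h
            · exact absurd (h.trans hcx.symm) hfc
          have he₀ne_f : e₀ ∉ ({f, x} : Set α) := by
            intro hmem
            rcases hmem with h | h
            · exact hfe₀ h.symm
            · exact he₀A' (by rw [h]; exact hxA')
          have h' := hK f hfA e₀ he₀E he₀ne_f
          have hseteq : insert f ({c, e₀} : Set α) = insert e₀ {f, x} := by
            rw [hcx]; ext w; simp only [mem_insert_iff, mem_singleton_iff]; tauto
          rwa [hseteq]
      refine ⟨f, hfJ, hfI, by rw [hIeq]; exact hind, ?_⟩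
      have hdd : insert f I \ A' = I \ A' := by
        ext w
        simp only [mem_diff, mem_insert_iff]
        constructor
        · rintro ⟨rfl | hwI, hwA'⟩
          · exact absurd hfA' hwA'
          · exact ⟨hwI, hwA'⟩
        · rintro ⟨hwI, hwA'⟩
          exact ⟨Or.inr hwI, hwA'⟩
      rw [hIeq] at hdd ⊢
      rw [hdd]
      rw [← hIeq, he₀]
      simp



end AuxLemmas

/-- If `A` is a rank-2 flat, `|E \ A| ≥ 3`, and `x ∉ A` belongs to no facet-defining flat
of rank 2 meeting `A`, then `M` is 2-decomposable by `(A ∪ {x}, 2)_=`. -/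
theorem twoDecomposable_of_flat_and_point (M : Matroid α) (hfin : M.E.Finite)
    (hconn : Conn M) (hsimple : IsSimple M) (hrank : rk M M.E = 3)
    (A : Set α) (hflat : IsFlat M A) (hrA : rk M A = 2)
    (hcompl : 3 ≤ (M.E \ A).ncard)
    (x : α) (hxE : x ∈ M.E) (hxA : x ∉ A)
    (hx : ∀ F : Set α, FacetFlat2 M F → (F ∩ A).Nonempty → x ∉ F) :
    TwoDecomposableBy M (A ∪ {x}) 2 := by
  have hAE : A ⊆ M.E := hflat.1
  have hclA : M.closure A = A := closure_eq_of_isFlat hfin hflat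
  set A' : Set α := A ∪ {x} with hA'def
  have hA'E : A' ⊆ M.E := union_subset hAE (singleton_subset_iff.2 hxE)
  have hmemA' : ∀ z : α, z ∈ A' ↔ z ∈ A ∨ z = x := by
    intro z; simp [hA'def, or_comm]
  have hAsubA' : A ⊆ A' := subset_union_left
  have hxA' : x ∈ A' := Or.inr rfl
  have hfinI : ∀ {I : Set α}, M.Indep I → I.Finite := fun hI => hfin.subset hI.subset_ground
  -- witness base 3 : a base inside A'
  have hIle3 : ∀ {I : Set α}, M.Indep I → I.ncard ≤ 3 := by
    intro I hI
    have h := indep_ncard_le_rk hfin hI hI.subset_ground Subset.rfl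
    rwa [hrank] at h
  have hK := key_indep M hfin hsimple hrank hAE hxE hxA hx
  obtain ⟨I₂, hI₂, hI₂A, hI₂c⟩ := exists_indep_ncard_rk hfin hAE
  rw [hrA] at hI₂c
  obtain ⟨a, b, hab, rfl⟩ := ncard_eq_two.1 hI₂c
  have haA : a ∈ A := hI₂A (Or.inl rfl)
  have hbA : b ∈ A := hI₂A (Or.inr rfl)
  have haxne : a ≠ x := fun h => hxA (h ▸ haA)
  have hbxne : b ≠ x := fun h => hxA (h ▸ hbA)
  have hB3ind : M.Indep (insert x {a, b}) := by
    have h1 : M.Indep (insert b {a, x}) := by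
      refine hK a haA b (hAE hbA) ?_
      rintro (rfl | rfl)
      · exact hab rfl
      · exact hxA hbA
    have h2 : insert b ({a, x} : Set α) = insert x {a, b} := by
      ext z; simp only [mem_insert_iff, mem_singleton_iff]; tauto
    rwa [h2] at h1
  have hxab : x ∉ ({a, b} : Set α) := by rintro (rfl | rfl) <;> simp_all
  have hB3c : (insert x ({a, b} : Set α)).ncard = 3 := by
    rw [ncard_insert_of_notMem hxab, ncard_pair hab]
  have hB3base : M.IsBase (insert x {a, b}) := (base_iff_card hfin hrank).2 ⟨hB3ind, hB3c⟩
  have hB3sub : insert x ({a, b} : Set α) ⊆ A' := by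
    rintro z (rfl | rfl | rfl)
    · exact hxA'
    · exact hAsubA' haA
    · exact hAsubA' hbA
  have hB3cap : (insert x ({a, b} : Set α)) ∩ A' = insert x {a, b} :=
    inter_eq_self_of_subset_left hB3sub
  have hB3diff : (insert x ({a, b} : Set α)) \ A' = ∅ := diff_eq_empty.2 hB3sub
  -- witness base 4 : a base with at most one element in A'
  have hxEA : x ∈ M.E \ A := ⟨hxE, hxA⟩
  have hEA'2 : 2 ≤ ((M.E \ A) \ {x}).ncard := by
    rw [ncard_diff_singleton_of_mem hxEA]
    omega
  obtain ⟨y, z, hy, hz, hyz⟩ := (one_lt_ncard_iff (s := (M.E \ A) \ {x}) ((hfin.diff).diff)).1 (by omega)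
  have hyE : y ∈ M.E := hy.1.1
  have hzE : z ∈ M.E := hz.1.1
  have hyA' : y ∉ A' := by
    rw [hmemA']; rintro (h | h)
    · exact hy.1.2 h
    · exact hy.2 h
  have hzA' : z ∉ A' := by
    rw [hmemA']; rintro (h | h)
    · exact hz.1.2 h
    · exact hz.2 h
  have hpairyz : M.Indep {y, z} := hsimple _ (by rintro w (rfl | rfl) <;> assumption)
    (by rw [ncard_pair hyz])
  obtain ⟨B₄, hB₄, hyzB₄⟩ := hpairyz.exists_isBase_superset
  have hB₄c : B₄.ncard = 3 := ((base_iff_card hfin hrank).1 hB₄).2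
  have hB₄fin : B₄.Finite := hfinI hB₄.indep
  have hB₄A' : (B₄ ∩ A').ncard ≤ 1 := by
    have hsub : B₄ ∩ A' ⊆ B₄ \ {y, z} := by
      rintro w ⟨hwB, hwA'⟩
      refine ⟨hwB, ?_⟩
      rintro (rfl | rfl)
      · exact hyA' hwA'
      · exact hzA' hwA'
    have hd : (B₄ \ ({y, z} : Set α)).ncard = B₄.ncard - ({y, z} : Set α).ncard :=
      ncard_diff hyzB₄ (hB₄fin.subset hyzB₄)
    calc (B₄ ∩ A').ncard ≤ (B₄ \ ({y, z} : Set α)).ncard :=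
          ncard_le_ncard hsub (hB₄fin.diff)
      _ = 1 := by rw [hd, hB₄c, ncard_pair hyz]
  -- the independence predicates
  set P1 : Set α → Prop := fun I => M.Indep I ∧ (I ∩ A').ncard ≤ 2 with hP1def
  set P2 : Set α → Prop := fun I => M.Indep I ∧ (I \ A').ncard ≤ 1 with hP2def
  have haug1 : ∀ ⦃I J : Set α⦄, P1 I → P1 J → I.ncard < J.ncard →
      ∃ e ∈ J, e ∉ I ∧ P1 (insert e I) :=
    aug_one M hfin hsimple hrank hAE hclA hxE hxA hx
  have haug2 : ∀ ⦃I J : Set α⦄, P2 I → P2 J → I.ncard < J.ncard →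
      ∃ e ∈ J, e ∉ I ∧ P2 (insert e I) :=
    aug_two M hfin hsimple hrank hAE hclA hxE hxA hx
  -- construct the two matroids
  have hP1empty : P1 ∅ := ⟨M.empty_indep, by simp⟩
  have hP1subset : ∀ ⦃I J : Set α⦄, P1 J → I ⊆ J → P1 I := by
    rintro I J ⟨hJ, hJA⟩ hIJ
    refine ⟨hJ.subset hIJ, le_trans ?_ hJA⟩
    exact ncard_le_ncard (inter_subset_inter_left _ hIJ) ((hfinI hJ).inter_of_left _)
  have hP1ground : ∀ ⦃I : Set α⦄, P1 I → I ⊆ M.E := fun I hI => hI.1.subset_ground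
  have hP2empty : P2 ∅ := ⟨M.empty_indep, by simp⟩
  have hP2subset : ∀ ⦃I J : Set α⦄, P2 J → I ⊆ J → P2 I := by
    rintro I J ⟨hJ, hJA⟩ hIJ
    refine ⟨hJ.subset hIJ, le_trans ?_ hJA⟩
    exact ncard_le_ncard (diff_subset_diff_left hIJ) ((hfinI hJ).diff)
  have hP2ground : ∀ ⦃I : Set α⦄, P2 I → I ⊆ M.E := fun I hI => hI.1.subset_ground
  obtain ⟨N₁, hN₁E, hN₁ind⟩ :
      ∃ N : Matroid α, N.E = M.E ∧ ∀ {I : Set α}, N.Indep I ↔ P1 I :=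
    ⟨(IndepMatroid.ofFinite hfin P1 hP1empty hP1subset haug1 hP1ground).matroid,
      rfl, Iff.rfl⟩
  obtain ⟨N₂, hN₂E, hN₂ind⟩ :
      ∃ N : Matroid α, N.E = M.E ∧ ∀ {I : Set α}, N.Indep I ↔ P2 I :=
    ⟨(IndepMatroid.ofFinite hfin P2 hP2empty hP2subset haug2 hP2ground).matroid,
      rfl, Iff.rfl⟩
  -- base characterization for N₁
  have hN₁base : ∀ B : Set α, N₁.IsBase B ↔ M.IsBase B ∧ (B ∩ A').ncard ≤ 2 := by
    intro B
    rw [isBase_iff_maximal_indep]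
    constructor
    · rintro ⟨hB, hmax⟩
      rw [hN₁ind] at hB
      have hBc : B.ncard = 3 := by
        by_contra hne
        have hlt : B.ncard < 3 := lt_of_le_of_ne (hIle3 hB.1) hne
        have hP1B₄ : P1 B₄ := ⟨hB₄.indep, le_trans hB₄A' one_le_two⟩
        obtain ⟨e, heB₄, heB, hins⟩ := haug1 hB hP1B₄ (by omega)
        have hsub := hmax (hN₁ind.2 hins) (subset_insert e B)
        exact heB (hsub (Or.inl rfl))
      exact ⟨(base_iff_card hfin hrank).2 ⟨hB.1, hBc⟩, hB.2⟩
    · rintro ⟨hBbase, hBA⟩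
      refine ⟨hN₁ind.2 ⟨hBbase.indep, hBA⟩, ?_⟩
      intro Y hY hBY
      rw [hN₁ind] at hY
      exact (hBbase.eq_of_subset_indep hY.1 hBY).ge
  -- base characterization for N₂
  have hN₂base : ∀ B : Set α, N₂.IsBase B ↔ M.IsBase B ∧ 2 ≤ (B ∩ A').ncard := by
    intro B
    rw [isBase_iff_maximal_indep]
    constructor
    · rintro ⟨hB, hmax⟩
      rw [hN₂ind] at hB
      have hBc : B.ncard = 3 := by
        by_contra hne
        have hlt : B.ncard < 3 := lt_of_le_of_ne (hIle3 hB.1) hne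
        have hP2B₃ : P2 (insert x {a, b}) := ⟨hB3ind, by rw [hB3diff]; simp⟩
        obtain ⟨e, heB₃, heB, hins⟩ := haug2 hB hP2B₃ (by omega)
        have hsub := hmax (hN₂ind.2 hins) (subset_insert e B)
        exact heB (hsub (Or.inl rfl))
      have hsplit : (B ∩ A').ncard + (B \ A').ncard = B.ncard :=
        ncard_inter_add_ncard_diff_eq_ncard B A' (hfinI hB.1)
      refine ⟨(base_iff_card hfin hrank).2 ⟨hB.1, hBc⟩, ?_⟩
      omega
    · rintro ⟨hBbase, hBA⟩
      have hBc : B.ncard = 3 := ((base_iff_card hfin hrank).1 hBbase).2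
      have hsplit : (B ∩ A').ncard + (B \ A').ncard = B.ncard :=
        ncard_inter_add_ncard_diff_eq_ncard B A' (hfinI hBbase.indep)
      refine ⟨hN₂ind.2 ⟨hBbase.indep, by omega⟩, ?_⟩
      intro Y hY hBY
      rw [hN₂ind] at hY
      exact (hBbase.eq_of_subset_indep hY.1 hBY).ge
  refine ⟨⟨N₁, hN₁E, hN₁base⟩, ⟨N₂, hN₂E, hN₂base⟩, ?_, ?_⟩
  · exact ⟨insert x {a, b}, hB3base, by rw [hB3cap, hB3c]; omega⟩
  · exact ⟨B₄, hB₄, by omega⟩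

end PaperWMO
end

section
/- Let M be a connected simple matroid of rank 3 on a finite ground set E, and let {A1, A2, A3} be a 3-partition in M. Then there do not exist distinct elements x, y ∈ A3 together with facet-defining flats F1 and F2 of rank 2 of M such that {x,y} ⊆ F1, F1 ∩ A1 ≠ ∅, {x,y} ⊆ F2 and F2 ∩ A2 ≠ ∅. (Equivalently, the graphs g(A1, A3) and g(A2, A3) have no common edge.) -/
open Set Matroid

namespace PaperWMO

variable {α : Type*}

lemma rk_bdd (M : Matroid α) (hfin : M.E.Finite) (X : Set α) :
    BddAbove {n : ℕ | ∃ I, M.Indep I ∧ I ⊆ X ∧ I.ncard = n} := by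
  refine ⟨M.E.ncard, fun n hn => ?_⟩
  obtain ⟨I, hI, _, rfl⟩ := hn
  exact Set.ncard_le_ncard hI.subset_ground hfin

lemma le_rk (M : Matroid α) (hfin : M.E.Finite) {X I : Set α}
    (hI : M.Indep I) (hIX : I ⊆ X) : I.ncard ≤ rk M X :=
  le_csSup (rk_bdd M hfin X) ⟨I, hI, hIX, rfl⟩

lemma rk_eq_of_basis' (M : Matroid α) (hfin : M.E.Finite) {X I : Set α}
    (hI : M.IsBasis' I X) : rk M X = I.ncard := by
  refine le_antisymm (csSup_le ⟨0, ∅, M.empty_indep, empty_subset _, by simp⟩ ?_)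
    (le_rk M hfin hI.indep hI.subset)
  rintro n ⟨J, hJ, hJX, rfl⟩
  obtain ⟨J', hJ', hJJ'⟩ := hJ.subset_isBasis'_of_subset hJX
  have h1 : (M ↾ X).IsBase I := isBase_restrict_iff'.2 hI
  have h2 : (M ↾ X).IsBase J' := isBase_restrict_iff'.2 hJ'
  have := h2.ncard_eq_ncard_of_isBase h1
  calc J.ncard ≤ J'.ncard :=
        Set.ncard_le_ncard hJJ' (hfin.subset hJ'.indep.subset_ground)
    _ = I.ncard := this

lemma rk_mono (M : Matroid α) (hfin : M.E.Finite) {X Y : Set α} (hXY : X ⊆ Y) :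
    rk M X ≤ rk M Y := by
  obtain ⟨I, hI⟩ := M.exists_isBasis' X
  rw [rk_eq_of_basis' M hfin hI]
  exact le_rk M hfin hI.indep (hI.subset.trans hXY)

lemma rk_submod (M : Matroid α) (hfin : M.E.Finite) (X Y : Set α) :
    rk M (X ∪ Y) + rk M (X ∩ Y) ≤ rk M X + rk M Y := by
  obtain ⟨I, hI⟩ := M.exists_isBasis' (X ∩ Y)
  obtain ⟨J, hJ, hIJ⟩ := hI.indep.subset_isBasis'_of_subset
    (show I ⊆ X ∪ Y from hI.subset.trans (Set.inter_subset_left.trans Set.subset_union_left))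
  have hJfin : J.Finite := hfin.subset hJ.indep.subset_ground
  rw [rk_eq_of_basis' M hfin hI, rk_eq_of_basis' M hfin hJ]
  have hIsub : I ⊆ J ∩ (X ∩ Y) := subset_inter hIJ hI.subset
  have hcard : I.ncard ≤ (J ∩ (X ∩ Y)).ncard :=
    Set.ncard_le_ncard hIsub (hJfin.inter_of_left _)
  have hunion : (J ∩ X) ∪ (J ∩ Y) = J := by
    rw [← inter_union_distrib_left, inter_eq_left.2 hJ.subset]
  have hinter : (J ∩ X) ∩ (J ∩ Y) = J ∩ (X ∩ Y) := by
    ext a; simp [mem_inter_iff]; tauto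
  have hkey : J.ncard + (J ∩ (X ∩ Y)).ncard = (J ∩ X).ncard + (J ∩ Y).ncard := by
    have := Set.ncard_union_add_ncard_inter (J ∩ X) (J ∩ Y)
      (hJfin.inter_of_left _) (hJfin.inter_of_left _)
    rw [hunion, hinter] at this
    exact this
  have h1 : (J ∩ X).ncard ≤ rk M X :=
    le_rk M hfin (hJ.indep.subset inter_subset_left) inter_subset_right
  have h2 : (J ∩ Y).ncard ≤ rk M Y :=
    le_rk M hfin (hJ.indep.subset inter_subset_left) inter_subset_right
  omega

/-- For a 3-partition `{A₁, A₂, A₃}` in `M`, the graphs `g(A₁, A₃)` and `g(A₂, A₃)` have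
no common edge. -/
theorem graphs_no_common_edge (M : Matroid α) (hfin : M.E.Finite)
    (hconn : Conn M) (hsimple : IsSimple M) (hrank : rk M M.E = 3)
    (A₁ A₂ A₃ : Set α) (hpart : ThreePartition M A₁ A₂ A₃) :
    ¬ ∃ (x y : α) (F₁ F₂ : Set α), x ∈ A₃ ∧ y ∈ A₃ ∧ x ≠ y ∧
      FacetFlat2 M F₁ ∧ x ∈ F₁ ∧ y ∈ F₁ ∧ (F₁ ∩ A₁).Nonempty ∧
      FacetFlat2 M F₂ ∧ x ∈ F₂ ∧ y ∈ F₂ ∧ (F₂ ∩ A₂).Nonempty := by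
  rintro ⟨x, y, F₁, F₂, hx3, hy3, hxy, hF₁, hxF₁, hyF₁, hF₁A₁, hF₂, hxF₂, hyF₂, hF₂A₂⟩
  obtain ⟨hpartE, _, _, _, _, _, _, hnoflat, _⟩ := hpart
  -- {x, y} is independent of size 2, contained in F₁ ∩ F₂
  have hxyE : ({x, y} : Set α) ⊆ M.E := by
    intro a ha
    rcases ha with rfl | ha
    · exact hF₁.1.1 hxF₁
    · rw [mem_singleton_iff] at ha; subst ha; exact hF₁.1.1 hyF₁
  have hxyind : M.Indep {x, y} := hsimple _ hxyE (by
    have := Set.ncard_insert_le x ({y} : Set α)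
    simpa using this)
  have hxycard : ({x, y} : Set α).ncard = 2 := Set.ncard_pair hxy
  have hxysub : ({x, y} : Set α) ⊆ F₁ ∩ F₂ := by
    intro a ha
    rcases ha with rfl | ha
    · exact ⟨hxF₁, hxF₂⟩
    · rw [mem_singleton_iff] at ha; subst ha; exact ⟨hyF₁, hyF₂⟩
  have hrki : 2 ≤ rk M (F₁ ∩ F₂) := by
    have := le_rk M hfin hxyind hxysub
    omega
  have hrku_le : rk M (F₁ ∪ F₂) ≤ 2 := by
    have := rk_submod M hfin F₁ F₂
    rw [hF₁.2.1, hF₂.2.1] at this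
    omega
  have hrku_ge : 2 ≤ rk M (F₁ ∪ F₂) := by
    rw [← hF₁.2.1]
    exact rk_mono M hfin subset_union_left
  have hrku : rk M (F₁ ∪ F₂) = 2 := le_antisymm hrku_le hrku_ge
  have hsubE : F₁ ∪ F₂ ⊆ M.E := union_subset hF₁.1.1 hF₂.1.1
  have h1 : F₁ ∪ F₂ = F₁ :=
    hF₁.1.2 _ subset_union_left hsubE (by rw [hrku, hF₁.2.1])
  have h2 : F₁ ∪ F₂ = F₂ :=
    hF₂.1.2 _ subset_union_right hsubE (by rw [hrku, hF₂.2.1])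
  have hFeq : F₁ = F₂ := by rw [← h1, h2]
  exact hnoflat ⟨F₁, hF₁, hF₁A₁, hFeq ▸ hF₂A₂, ⟨x, hxF₁, hx3⟩⟩

end PaperWMO
end
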